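/- Let f be holomorphic on a neighborhood of 0 with f(0) = 0 and f'(0) = λ where 0 < |λ| < 1. Then there exists a unique holomorphic map h defined near 0 with h(0) = 0, h'(0) = 1, and h(f(z)) = λ h(z) for all z near 0. -/

import Mathlib

open Filter Complex Metric

lemma koenigs_aux_dslope_analytic {f : ℂ → ℂ} (hf : AnalyticAt ℂ f 0) :
    AnalyticAt ℂ (dslope f 0) 0 := by
  obtain ⟨p, hp⟩ := hf
  exact ⟨p.fslope, hp.has_fpower_series_dslope_fslope⟩

lemma koenigs_aux_dslope_eq (u : ℂ → ℂ) (z : ℂ) : u z = u 0 + z * dslope u 0 z := by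
  rcases eq_or_ne z 0 with rfl | hz
  · simp
  · rw [dslope_of_ne _ hz, slope_def_field]
    field_simp
    ring

lemma koenigs_aux_mul_dslope {u : ℂ → ℂ} (h0 : u 0 = 0) (z : ℂ) :
    u z = z * dslope u 0 z := by
  have := koenigs_aux_dslope_eq u z
  rwa [h0, zero_add] at this

set_option maxHeartbeats 2000000 in
/-- Koenigs linearization at an attracting, non-superattracting fixed point,
together with uniqueness of the normalized linearizing map. -/
theorem stmt9 (f : ℂ → ℂ) (lam : ℂ)
    (hf : AnalyticAt ℂ f 0) (hf0 : f 0 = 0) (hf' : deriv f 0 = lam)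
    (hlam0 : 0 < ‖lam‖) (hlam1 : ‖lam‖ < 1) :
    (∃ h : ℂ → ℂ, AnalyticAt ℂ h 0 ∧ h 0 = 0 ∧ deriv h 0 = 1 ∧
      ∀ᶠ z in nhds (0 : ℂ), h (f z) = lam * h z) ∧
    (∀ h₁ h₂ : ℂ → ℂ,
      (AnalyticAt ℂ h₁ 0 ∧ h₁ 0 = 0 ∧ deriv h₁ 0 = 1 ∧
        ∀ᶠ z in nhds (0 : ℂ), h₁ (f z) = lam * h₁ z) →
      (AnalyticAt ℂ h₂ 0 ∧ h₂ 0 = 0 ∧ deriv h₂ 0 = 1 ∧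
        ∀ᶠ z in nhds (0 : ℂ), h₂ (f z) = lam * h₂ z) →
      ∀ᶠ z in nhds (0 : ℂ), h₁ z = h₂ z) := by
  have hlamne : lam ≠ 0 := by
    intro h; rw [h] at hlam0; simp at hlam0
  set a : ℝ := ‖lam‖ with ha
  clear_value a
  -- quadratic remainder
  set g : ℂ → ℂ := dslope (dslope f 0) 0 with hgdef
  clear_value g
  have hga : AnalyticAt ℂ g 0 := by
    rw [hgdef]
    exact koenigs_aux_dslope_analytic (koenigs_aux_dslope_analytic hf)
  have hfz : ∀ z, f z = lam * z + z ^ 2 * g z := by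
    intro z
    have h1 : f z = z * dslope f 0 z := koenigs_aux_mul_dslope hf0 z
    have h2 : dslope f 0 z = dslope f 0 0 + z * g z := by
      rw [hgdef]; exact koenigs_aux_dslope_eq _ z
    rw [h1, h2, dslope_same, hf']
    ring
  -- constants
  set c : ℝ := (a + Real.sqrt a) / 2 with hcdef
  clear_value c
  have ha0 : 0 < a := hlam0
  have hsa0 : 0 < Real.sqrt a := Real.sqrt_pos.2 ha0
  have hsa1 : Real.sqrt a < 1 := by
    rw [show (1:ℝ) = Real.sqrt 1 by simp]
    exact Real.sqrt_lt_sqrt ha0.le hlam1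
  have hasa : a < Real.sqrt a := by
    nlinarith [Real.mul_self_sqrt ha0.le]
  have hac : a < c := by rw [hcdef]; linarith
  have hc0 : 0 < c := ha0.trans hac
  have hcsa : c < Real.sqrt a := by rw [hcdef]; linarith
  have hc1 : c < 1 := hcsa.trans hsa1
  have hc2a : c ^ 2 < a := by
    nlinarith [Real.mul_self_sqrt ha0.le]
  -- radius
  set M : ℝ := ‖g 0‖ + 1 with hMdef
  clear_value M
  have hM0 : 0 < M := by rw [hMdef]; positivity
  have E1 : ∀ᶠ z in nhds (0:ℂ), AnalyticAt ℂ f z := hf.eventually_analyticAt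
  have E2 : ∀ᶠ z in nhds (0:ℂ), ‖g z‖ < M := by
    have hco : ContinuousAt (fun z => ‖g z‖) 0 :=
      continuous_norm.continuousAt.comp hga.continuousAt
    exact hco.eventually_lt_const (by simp [hMdef])
  obtain ⟨ε, hε0, hεsub⟩ := Metric.mem_nhds_iff.mp (E1.and E2)
  set r : ℝ := min (ε / 2) ((c - a) / M) with hrdef
  clear_value r
  have hr0 : 0 < r := by
    rw [hrdef]
    apply lt_min (by linarith)
    apply div_pos (by linarith) hM0
  have hrsub : closedBall (0:ℂ) r ⊆ ball 0 ε := by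
    apply (closedBall_subset_ball _)
    calc r ≤ ε / 2 := by rw [hrdef]; exact min_le_left _ _
    _ < ε := by linarith
  have hfan : ∀ z ∈ closedBall (0:ℂ) r, AnalyticAt ℂ f z := fun z hz => (hεsub (hrsub hz)).1
  have hgM : ∀ z ∈ closedBall (0:ℂ) r, ‖g z‖ ≤ M :=
    fun z hz => ((hεsub (hrsub hz)).2).le
  have hrM : r * M ≤ c - a := by
    have := min_le_right (ε/2) ((c - a)/M)
    rw [← hrdef] at this
    calc r * M ≤ ((c - a)/M) * M := by nlinarith
    _ = c - a := by field_simp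
  -- key contraction bound
  have key : ∀ z ∈ closedBall (0:ℂ) r, ‖f z‖ ≤ c * ‖z‖ := by
    intro z hz
    have hzr : ‖z‖ ≤ r := by
      simpa [Complex.dist_eq] using mem_closedBall.mp hz
    have h1 : ‖f z‖ ≤ a * ‖z‖ + ‖z‖ ^ 2 * ‖g z‖ := by
      rw [hfz z]
      refine (norm_add_le _ _).trans ?_
      simp only [norm_mul, norm_pow]
      rw [ha]
    have h2 : ‖z‖ ^ 2 * ‖g z‖ ≤ ‖z‖ * (r * M) := by
      have hgz := hgM z hz
      have hz0 : 0 ≤ ‖z‖ := norm_nonneg z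
      have e1 : ‖z‖ ^ 2 * ‖g z‖ ≤ ‖z‖ ^ 2 * M := by nlinarith
      have e2 : ‖z‖ * M * ‖z‖ ≤ ‖z‖ * M * r :=
        mul_le_mul_of_nonneg_left hzr (mul_nonneg hz0 hM0.le)
      nlinarith
    nlinarith [norm_nonneg z]
  -- iterates stay in the ball
  have hmap : ∀ z ∈ closedBall (0:ℂ) r, f z ∈ closedBall (0:ℂ) r := by
    intro z hz
    have hzr : ‖z‖ ≤ r := by simpa [Complex.dist_eq] using mem_closedBall.mp hz
    have := key z hz
    rw [mem_closedBall, Complex.dist_eq, sub_zero]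
    nlinarith
  have hiter : ∀ z ∈ closedBall (0:ℂ) r, ∀ n : ℕ,
      ‖f^[n] z‖ ≤ c ^ n * ‖z‖ ∧ f^[n] z ∈ closedBall (0:ℂ) r := by
    intro z hz n
    induction n with
    | zero => simpa using hz
    | succ n ih =>
      obtain ⟨ih1, ih2⟩ := ih
      constructor
      · rw [Function.iterate_succ_apply']
        calc ‖f (f^[n] z)‖ ≤ c * ‖f^[n] z‖ := key _ ih2
        _ ≤ c * (c ^ n * ‖z‖) := by nlinarith
        _ = c ^ (n+1) * ‖z‖ := by ring
      · rw [Function.iterate_succ_apply']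
        exact hmap _ ih2
  -- the approximating sequence and the telescoping differences
  set φ : ℕ → ℂ → ℂ := fun n z => f^[n] z / lam ^ n with hφdef
  clear_value φ
  set d : ℕ → ℂ → ℂ := fun n z => (f^[n] z) ^ 2 * g (f^[n] z) / lam ^ (n + 1) with hddef
  clear_value d
  have htel : ∀ n z, φ (n + 1) z - φ n z = d n z := by
    intro n z
    have hlp : lam ^ (n+1) ≠ 0 := pow_ne_zero _ hlamne
    have hln : lam ^ n ≠ 0 := pow_ne_zero _ hlamne
    simp only [hφdef, hddef, Function.iterate_succ_apply']
    rw [hfz (f^[n] z)]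
    field_simp
    ring
  set u : ℕ → ℝ := fun n => (M * r ^ 2 / a) * (c ^ 2 / a) ^ n with hudef
  clear_value u
  have hu : Summable u := by
    rw [hudef]
    apply Summable.mul_left
    apply summable_geometric_of_lt_one (by positivity)
    rw [div_lt_one ha0]
    exact hc2a
  have hdb : ∀ (n : ℕ) (z : ℂ), z ∈ closedBall (0:ℂ) r → ‖d n z‖ ≤ u n := by
    intro n z hz
    obtain ⟨hb, hmem⟩ := hiter z hz n
    have hzr : ‖z‖ ≤ r := by simpa [Complex.dist_eq] using mem_closedBall.mp hz
    have hwr : ‖f^[n] z‖ ≤ c ^ n * r := by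
      calc ‖f^[n] z‖ ≤ c ^ n * ‖z‖ := hb
      _ ≤ c ^ n * r := mul_le_mul_of_nonneg_left hzr (pow_nonneg hc0.le n)
    have hgw : ‖g (f^[n] z)‖ ≤ M := hgM _ hmem
    have h1 : ‖d n z‖ = ‖f^[n] z‖ ^ 2 * ‖g (f^[n] z)‖ / a ^ (n+1) := by
      simp only [hddef, norm_div, norm_mul, norm_pow, ha]
    rw [h1, hudef]
    have hap : (0:ℝ) < a ^ (n+1) := pow_pos ha0 _
    rw [div_le_iff₀ hap]
    have e0 : (0:ℝ) ≤ ‖f^[n] z‖ := norm_nonneg _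
    have e1 : ‖f^[n] z‖ ^ 2 ≤ (c ^ n * r) ^ 2 := pow_le_pow_left₀ e0 hwr 2
    have e2 : ‖f^[n] z‖ ^ 2 * ‖g (f^[n] z)‖ ≤ (c ^ n * r) ^ 2 * M :=
      mul_le_mul e1 hgw (norm_nonneg _) (by positivity)
    have e3 : M * r ^ 2 / a * (c ^ 2 / a) ^ n * a ^ (n+1) = (c ^ n * r) ^ 2 * M := by
      field_simp
      rw [div_pow, pow_succ a n, ← mul_assoc, div_mul_cancel₀ _ (pow_ne_zero n ha0.ne')]
      ring
    rw [e3]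
    exact e2
  have hTU0 : TendstoUniformlyOn (fun N z => ∑ n ∈ Finset.range N, d n z)
      (fun z => ∑' n, d n z) atTop (closedBall (0:ℂ) r) :=
    tendstoUniformlyOn_tsum_nat hu hdb
  set h : ℂ → ℂ := fun z => z + ∑' n, d n z with hhdef
  clear_value h
  have hsum_eq : ∀ (N : ℕ) (z : ℂ), ∑ n ∈ Finset.range N, d n z = φ N z - z := by
    intro N z
    have : ∑ n ∈ Finset.range N, d n z = ∑ n ∈ Finset.range N, (φ (n+1) z - φ n z) := by
      apply Finset.sum_congr rfl
      intro n _
      rw [htel]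
    rw [this, Finset.sum_range_sub (fun n => φ n z)]
    simp [hφdef]
  have hφU : TendstoUniformlyOn φ h atTop (closedBall (0:ℂ) r) := by
    rw [Metric.tendstoUniformlyOn_iff] at hTU0 ⊢
    intro ε' hε'
    filter_upwards [hTU0 ε' hε'] with N hN z hz
    have := hN z hz
    rw [hsum_eq] at this
    have heq : dist (h z) (φ N z) = dist (∑' n, d n z) (φ N z - z) := by
      simp only [hhdef, Complex.dist_eq]
      ring_nf
    rw [heq]
    exact this
  -- differentiability of the iterates
  have hWdiff : ∀ (N : ℕ), ∀ z ∈ closedBall (0:ℂ) r, DifferentiableAt ℂ (f^[N]) z := by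
    intro N
    induction N with
    | zero => intro z _; simpa using differentiableAt_id'
    | succ N ih =>
      intro z hz
      have h1 : f^[N] z ∈ closedBall (0:ℂ) r := (hiter z hz N).2
      have h2 : DifferentiableAt ℂ f (f^[N] z) := (hfan _ h1).differentiableAt
      rw [Function.iterate_succ']
      exact h2.comp z (ih z hz)
  have hφdiff : ∀ N : ℕ, DifferentiableOn ℂ (φ N) (ball (0:ℂ) r) := by
    intro N z hz
    have : DifferentiableAt ℂ (φ N) z := by
      rw [hφdef]
      exact ((hWdiff N z (ball_subset_closedBall hz)).div_const _)
    exact this.differentiableWithinAt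
  have hTLU : TendstoLocallyUniformlyOn φ h atTop (ball (0:ℂ) r) :=
    (hφU.mono ball_subset_closedBall).tendstoLocallyUniformlyOn
  have hhd : DifferentiableOn ℂ h (ball (0:ℂ) r) :=
    hTLU.differentiableOn (Eventually.of_forall hφdiff) isOpen_ball
  have hball_nhds : ball (0:ℂ) r ∈ nhds (0:ℂ) := ball_mem_nhds _ hr0
  have hhan : AnalyticAt ℂ h 0 := hhd.analyticAt hball_nhds
  -- h 0 = 0
  have hh0 : h 0 = 0 := by
    rw [hhdef]
    have hd0 : ∀ n : ℕ, d n (0:ℂ) = 0 := by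
      intro n
      rw [hddef]
      simp [Function.iterate_fixed hf0]
    simp [hd0]
  -- derivative of h at 0
  have hW' : ∀ N : ℕ, deriv (f^[N]) (0:ℂ) = lam ^ N := by
    intro N
    induction N with
    | zero => simp
    | succ N ih =>
      have h0mem : (0:ℂ) ∈ closedBall (0:ℂ) r := mem_closedBall_self hr0.le
      have hN0 : f^[N] (0:ℂ) = 0 := Function.iterate_fixed hf0 N
      rw [Function.iterate_succ', deriv_comp 0 (by rw [hN0]; exact hf.differentiableAt)
        (hWdiff N 0 h0mem), hN0, hf', ih]
      ring
  have hφ' : ∀ N : ℕ, deriv (φ N) (0:ℂ) = 1 := by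
    intro N
    rw [hφdef]
    simp only [deriv_div_const, hW']
    exact div_self (pow_ne_zero _ hlamne)
  have hderconv : TendstoLocallyUniformlyOn (fun N => deriv (φ N)) (deriv h) atTop (ball (0:ℂ) r) :=
    hTLU.deriv (Eventually.of_forall hφdiff) isOpen_ball
  have hdtend : Tendsto (fun N => deriv (φ N) 0) atTop (nhds (deriv h 0)) :=
    hderconv.tendsto_at (mem_ball_self hr0)
  have hder1 : deriv h 0 = 1 := by
    have h1 : Tendsto (fun _ : ℕ => (1:ℂ)) atTop (nhds (deriv h 0)) := by
      apply hdtend.congr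
      intro N
      rw [hφ' N]
    exact (tendsto_nhds_unique h1 tendsto_const_nhds)
  -- functional equation
  have hfe : ∀ z ∈ ball (0:ℂ) r, h (f z) = lam * h z := by
    intro z hz
    have hz' : z ∈ closedBall (0:ℂ) r := ball_subset_closedBall hz
    have hfz' : f z ∈ closedBall (0:ℂ) r := hmap z hz'
    have t1 : Tendsto (fun N => φ N (f z)) atTop (nhds (h (f z))) := hφU.tendsto_at hfz'
    have t2 : Tendsto (fun N => φ N z) atTop (nhds (h z)) := hφU.tendsto_at hz'
    have t3 : Tendsto (fun N => lam * φ (N + 1) z) atTop (nhds (lam * h z)) :=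
      ((t2.comp (tendsto_add_atTop_nat 1)).const_mul lam)
    have heqN : ∀ N : ℕ, φ N (f z) = lam * φ (N + 1) z := by
      intro N
      rw [hφdef]
      show f^[N] (f z) / lam ^ N = lam * (f^[N + 1] z / lam ^ (N + 1))
      rw [Function.iterate_succ_apply, pow_succ]
      have hln : lam ^ N ≠ 0 := pow_ne_zero _ hlamne
      field_simp
    exact tendsto_nhds_unique (t1.congr heqN) t3
  constructor
  · exact ⟨h, hhan, hh0, hder1, by filter_upwards [hball_nhds] with z hz using hfe z hz⟩
  -- uniqueness
  intro h₁ h₂ ⟨ha1, h10, hd1, he1⟩ ⟨ha2, h20, hd2, he2⟩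
  obtain ⟨ε', hε'0, hε'sub⟩ := Metric.mem_nhds_iff.mp (he1.and he2)
  obtain ⟨ρ, hρ0, hρr, hρsub⟩ : ∃ ρ : ℝ, 0 < ρ ∧ ρ ≤ r ∧
      ball (0:ℂ) ρ ⊆ {z | h₁ (f z) = lam * h₁ z ∧ h₂ (f z) = lam * h₂ z} := by
    refine ⟨min r (ε' / 2), lt_min hr0 (by linarith), min_le_left _ _, ?_⟩
    intro z hz
    apply hε'sub
    rw [mem_ball] at hz ⊢
    calc dist z 0 < min r (ε' / 2) := hz
    _ ≤ ε' / 2 := min_le_right _ _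
    _ < ε' := by linarith
  set ψ₁ : ℂ → ℂ := dslope h₁ 0 with hψ1def
  set ψ₂ : ℂ → ℂ := dslope h₂ 0 with hψ2def
  clear_value ψ₁ ψ₂
  have hψ1a : ContinuousAt ψ₁ 0 := by
    rw [hψ1def]; exact (koenigs_aux_dslope_analytic ha1).continuousAt
  have hψ2a : ContinuousAt ψ₂ 0 := by
    rw [hψ2def]; exact (koenigs_aux_dslope_analytic ha2).continuousAt
  have hψ10 : ψ₁ 0 = 1 := by rw [hψ1def, dslope_same, hd1]
  have hψ20 : ψ₂ 0 = 1 := by rw [hψ2def, dslope_same, hd2]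
  have hrep1 : ∀ z, h₁ z = z * ψ₁ z := by
    intro z; rw [hψ1def]; exact koenigs_aux_mul_dslope h10 z
  have hrep2 : ∀ z, h₂ z = z * ψ₂ z := by
    intro z; rw [hψ2def]; exact koenigs_aux_mul_dslope h20 z
  have hkey : ∀ z ∈ ball (0:ℂ) ρ, h₁ z = h₂ z := by
    intro z hz
    have hzρ : ‖z‖ < ρ := by simpa [Complex.dist_eq] using mem_ball.mp hz
    -- the orbit stays in the small ball
    have horb : ∀ n : ℕ, f^[n] z ∈ ball (0:ℂ) ρ := by
      intro n
      have hzr' : z ∈ closedBall (0:ℂ) r :=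
        mem_closedBall.mpr (by rw [Complex.dist_eq, sub_zero]; linarith)
      have hb := (hiter z hzr' n).1
      rw [mem_ball, Complex.dist_eq, sub_zero]
      have hcn1 : c ^ n ≤ 1 := pow_le_one₀ hc0.le hc1.le
      nlinarith [norm_nonneg (f^[n] z), norm_nonneg z]
    -- iterated functional equation
    have hlin : ∀ n : ℕ, h₁ (f^[n] z) = lam ^ n * h₁ z ∧ h₂ (f^[n] z) = lam ^ n * h₂ z := by
      intro n
      induction n with
      | zero => simp
      | succ n ih =>
        obtain ⟨ih1, ih2⟩ := ih
        obtain ⟨e1, e2⟩ := hρsub (horb n)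
        rw [Function.iterate_succ_apply']
        constructor
        · rw [e1, ih1, pow_succ]; ring
        · rw [e2, ih2, pow_succ]; ring
    -- the key識 identity
    have heqn : ∀ n : ℕ, h₁ z * ψ₂ (f^[n] z) = h₂ z * ψ₁ (f^[n] z) := by
      intro n
      apply mul_left_cancel₀ (pow_ne_zero n hlamne)
      have e1 := (hlin n).1
      have e2 := (hlin n).2
      have r1 := hrep1 (f^[n] z)
      have r2 := hrep2 (f^[n] z)
      calc lam ^ n * (h₁ z * ψ₂ (f^[n] z)) = (lam ^ n * h₁ z) * ψ₂ (f^[n] z) := by ring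
      _ = (f^[n] z * ψ₁ (f^[n] z)) * ψ₂ (f^[n] z) := by rw [← e1, ← r1]
      _ = (f^[n] z * ψ₂ (f^[n] z)) * ψ₁ (f^[n] z) := by ring
      _ = (lam ^ n * h₂ z) * ψ₁ (f^[n] z) := by rw [← r2, e2]
      _ = lam ^ n * (h₂ z * ψ₁ (f^[n] z)) := by ring
    -- the orbit tends to 0
    have horb0 : Tendsto (fun n => f^[n] z) atTop (nhds (0:ℂ)) := by
      rw [tendsto_zero_iff_norm_tendsto_zero]
      have hzr' : z ∈ closedBall (0:ℂ) r :=
        mem_closedBall.mpr (by rw [Complex.dist_eq, sub_zero]; linarith)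
      apply squeeze_zero (fun n => norm_nonneg _)
        (fun n => by simpa using (hiter z hzr' n).1)
      have := (tendsto_pow_atTop_nhds_zero_of_lt_one hc0.le hc1).mul_const (‖z‖)
      simpa using this
    have T1 : Tendsto (fun n => h₁ z * ψ₂ (f^[n] z)) atTop (nhds (h₁ z)) := by
      have := (hψ2a.tendsto.comp horb0).const_mul (h₁ z)
      rw [hψ20, mul_one] at this
      exact this
    have T2 : Tendsto (fun n => h₂ z * ψ₁ (f^[n] z)) atTop (nhds (h₂ z)) := by
      have := (hψ1a.tendsto.comp horb0).const_mul (h₂ z)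
      rw [hψ10, mul_one] at this
      exact this
    exact tendsto_nhds_unique (T1.congr heqn) T2
  filter_upwards [ball_mem_nhds (0:ℂ) hρ0] with z hz using hkey z hz
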